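/- Euler's pentagonal number theorem: for |q| < 1, the infinite product ∏_{n=1}^∞ (1 - q^n) equals the sum ∑_{m=-∞}^∞ (-1)^m q^{m(3m-1)/2}. -/

import Mathlib

namespace EulerPentagon
open Finset Filter Topology

/-- weight of a finset of indices: part `i+1` for each `i ∈ S`. -/
def wt (S : Finset ℕ) : ℕ := ∑ i ∈ S, (i+1)

noncomputable def F (q : ℂ) (S : Finset ℕ) : ℂ := ∏ i ∈ S, (-(q ^ (i+1)))

lemma F_eq (q : ℂ) (S : Finset ℕ) : F q S = (-1)^S.card * q ^ wt S := by
  rw [F, wt, ← Finset.prod_pow_eq_pow_sum, ← Finset.prod_const (-1 : ℂ),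
    ← Finset.prod_mul_distrib]
  exact Finset.prod_congr rfl fun i _ => by ring

lemma norm_F (q : ℂ) (S : Finset ℕ) : ‖F q S‖ = ‖q‖ ^ wt S := by
  rw [F, wt, norm_prod, ← Finset.prod_pow_eq_pow_sum]
  exact Finset.prod_congr rfl fun i _ => by rw [norm_neg, norm_pow]

lemma summable_geom_aux {r : ℝ} (h0 : 0 ≤ r) (h1 : r < 1) :
    Summable (fun i : ℕ => r ^ (i+1)) := by
  have := summable_geometric_of_lt_one h0 h1
  exact (summable_nat_add_iff 1).2 this

lemma summable_norm_F (q : ℂ) (hq : ‖q‖ < 1) : Summable (fun S => ‖F q S‖) := by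
  set r := ‖q‖ with hr
  have h0 : 0 ≤ r := norm_nonneg q
  have hgeom := summable_geom_aux h0 hq
  apply summable_of_sum_le (c := Real.exp (∑' i : ℕ, r ^ (i+1)))
  · intro S; positivity
  · intro u
    have hsub : u ⊆ (u.sup id).powerset := by
      intro S hS
      exact Finset.mem_powerset.2 (Finset.le_sup (f := id) hS)
    calc ∑ S ∈ u, ‖F q S‖ ≤ ∑ S ∈ (u.sup id).powerset, ‖F q S‖ :=
          Finset.sum_le_sum_of_subset_of_nonneg hsub (fun _ _ _ => norm_nonneg _)
      _ = ∏ i ∈ u.sup id, (r ^ (i+1) + 1) := by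
          rw [Finset.prod_add]
          refine Finset.sum_congr rfl fun t ht => ?_
          rw [norm_F]
          simp [wt, ← Finset.prod_pow_eq_pow_sum, hr]
      _ ≤ ∏ i ∈ u.sup id, Real.exp (r ^ (i+1)) := by
          apply Finset.prod_le_prod
          · intro i _; positivity
          · intro i _
            linarith [Real.add_one_le_exp (r ^ (i+1))]
      _ = Real.exp (∑ i ∈ u.sup id, r ^ (i+1)) := by rw [Real.exp_sum]
      _ ≤ Real.exp (∑' i : ℕ, r ^ (i+1)) := by
          apply Real.exp_le_exp.2
          exact Summable.sum_le_tsum _ (fun i _ => by positivity) hgeom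

lemma summable_F (q : ℂ) (hq : ‖q‖ < 1) : Summable (F q) :=
  (summable_norm_F q hq).of_norm

lemma tendsto_powerset_atTop : Tendsto (Finset.powerset : Finset ℕ → Finset (Finset ℕ)) atTop atTop := by
  apply tendsto_atTop_atTop.2
  intro T
  refine ⟨T.sup id, fun s hs => ?_⟩
  intro t ht
  exact Finset.mem_powerset.2 (le_trans (Finset.le_sup (f := id) ht) hs)

lemma hasProd_F (q : ℂ) (hq : ‖q‖ < 1) :
    HasProd (fun n => 1 - q^(n+1)) (∑' S, F q S) := by
  have hsum : HasSum (F q) (∑' S, F q S) := (summable_F q hq).hasSum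
  have key : ∀ s : Finset ℕ, ∏ n ∈ s, (1 - q^(n+1)) = ∑ t ∈ s.powerset, F q t := by
    intro s
    have : ∀ n : ℕ, 1 - q^(n+1) = -(q^(n+1)) + 1 := fun n => by ring
    simp_rw [this, Finset.prod_add, F]
    simp
  rw [HasProd]
  have := hsum.comp tendsto_powerset_atTop
  simpa [Function.comp_def, key] using this

lemma tprod_eq_tsum_F (q : ℂ) (hq : ‖q‖ < 1) :
    ∏' n : ℕ, (1 - q ^ (n + 1)) = ∑' S, F q S :=
  (hasProd_F q hq).tprod_eq

def exc (S : Finset ℕ) : Prop :=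
  (∃ a, S = Finset.Icc a (2*a)) ∨ (∃ a, S = Finset.Icc (a+1) (2*a+1)) ∨ S = ∅

lemma filt_ne (S : Finset ℕ) (hS : S.Nonempty) :
    (S.filter fun i => Finset.Icc i (S.max' hS) ⊆ S).Nonempty := by
  refine ⟨S.max' hS, Finset.mem_filter.2 ⟨S.max'_mem hS, ?_⟩⟩
  rw [Finset.Icc_self, Finset.singleton_subset_iff]
  exact S.max'_mem hS

def tt (S : Finset ℕ) (hS : S.Nonempty) : ℕ :=
  (S.filter fun i => Finset.Icc i (S.max' hS) ⊆ S).min' (filt_ne S hS)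

lemma tt_mem (S : Finset ℕ) (hS : S.Nonempty) : tt S hS ∈ S :=
  (Finset.mem_filter.1 ((S.filter _).min'_mem (filt_ne S hS))).1

lemma tt_icc (S : Finset ℕ) (hS : S.Nonempty) : Finset.Icc (tt S hS) (S.max' hS) ⊆ S :=
  (Finset.mem_filter.1 ((S.filter _).min'_mem (filt_ne S hS))).2

lemma tt_min (S : Finset ℕ) (hS : S.Nonempty) {i : ℕ} (h1 : i ∈ S)
    (h2 : Finset.Icc i (S.max' hS) ⊆ S) : tt S hS ≤ i :=
  Finset.min'_le _ _ (Finset.mem_filter.2 ⟨h1, h2⟩)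

lemma lt_tt (S : Finset ℕ) (hS : S.Nonempty) {y : ℕ} (hy : y ∉ S) (hyM : y ≤ S.max' hS) :
    y < tt S hS := by
  by_contra h
  push_neg at h
  exact hy (tt_icc S hS (Finset.mem_Icc.2 ⟨h, hyM⟩))

def iota (S : Finset ℕ) : Finset ℕ :=
  if hS : S.Nonempty then
    if Finset.Icc (S.max' hS - S.min' hS) (S.max' hS) ⊆ S then
      insert (S.max' hS + 1) ((S.erase (S.min' hS)).erase (S.max' hS - S.min' hS))
    else
      insert (S.max' hS - tt S hS) (insert (tt S hS - 1) (S.erase (S.max' hS)))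
  else ∅

lemma iota_eq_opA (S : Finset ℕ) (hS : S.Nonempty)
    (h : Finset.Icc (S.max' hS - S.min' hS) (S.max' hS) ⊆ S) :
    iota S = insert (S.max' hS + 1) ((S.erase (S.min' hS)).erase (S.max' hS - S.min' hS)) := by
  rw [iota, dif_pos hS, if_pos h]

lemma iota_eq_opB (S : Finset ℕ) (hS : S.Nonempty)
    (h : ¬ Finset.Icc (S.max' hS - S.min' hS) (S.max' hS) ⊆ S) :
    iota S = insert (S.max' hS - tt S hS) (insert (tt S hS - 1) (S.erase (S.max' hS))) := by
  rw [iota, dif_pos hS, if_neg h]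

lemma caseA (S : Finset ℕ) (hS : S.Nonempty) (hexc : ¬ exc S)
    (hA : Finset.Icc (S.max' hS - S.min' hS) (S.max' hS) ⊆ S) :
    wt (iota S) = wt S ∧ S.card = (iota S).card + 1 ∧ ¬ exc (iota S) ∧ iota (iota S) = S := by
  set m := S.min' hS with hm
  set M := S.max' hS with hM
  have hmem_m : m ∈ S := S.min'_mem hS
  have hmem_M : M ∈ S := S.max'_mem hS
  have hlb : ∀ x ∈ S, m ≤ x := fun x hx => S.min'_le x hx
  have hub : ∀ x ∈ S, x ≤ M := fun x hx => S.le_max' x hx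
  have hmM : m ≤ M := hlb M hmem_M
  have hMm_mem : M - m ∈ S := hA (Finset.mem_Icc.2 ⟨le_refl _, Nat.sub_le _ _⟩)
  have h2m : 2*m < M := by
    by_contra hc
    push_neg at hc
    have h1 : m ≤ M - m := hlb _ hMm_mem
    have hMm : M - m = m := by omega
    apply hexc
    left
    refine ⟨m, le_antisymm ?_ ?_⟩
    · have : 2*m = M := by omega
      rw [this]
      exact fun x hx => Finset.mem_Icc.2 ⟨hlb x hx, hub x hx⟩
    · have : Finset.Icc m (2*m) = Finset.Icc (M-m) M := by rw [hMm]; congr 1; omega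
      rw [this]; exact hA
  have hmMm : m < M - m := by omega
  have hM1 : M + 1 ∉ S := fun h => by have := hub _ h; omega
  set A := insert (M+1) ((S.erase m).erase (M-m)) with hA_def
  have hiota : iota S = A := iota_eq_opA S hS hA
  have hmemA : ∀ x, x ∈ A ↔ x = M+1 ∨ (x ≠ M - m ∧ x ≠ m ∧ x ∈ S) := by
    intro x
    simp only [hA_def, Finset.mem_insert, Finset.mem_erase]
  have hMm_notA : M - m ∉ A := by
    rw [hmemA]; push_neg
    exact ⟨by omega, fun h => absurd rfl h⟩
  have hA_lb : ∀ x ∈ A, m < x := by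
    intro x hx
    rcases (hmemA x).1 hx with h | ⟨_, h2, h3⟩
    · omega
    · have := hlb x h3; omega
  have hA_ub : ∀ x ∈ A, x ≤ M + 1 := by
    intro x hx
    rcases (hmemA x).1 hx with h | ⟨_, _, h3⟩
    · omega
    · have := hub x h3; omega
  have hAne : A.Nonempty := ⟨M+1, Finset.mem_insert_self _ _⟩
  have hmaxA : A.max' hAne = M + 1 :=
    le_antisymm (Finset.max'_le _ _ _ hA_ub) (Finset.le_max' _ _ (Finset.mem_insert_self _ _))
  have hminA : m < A.min' hAne := hA_lb _ (A.min'_mem hAne)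
  have hminA_ub : A.min' hAne ≤ M+1 := hA_ub _ (A.min'_mem hAne)
  have hIccA : Finset.Icc (M-m+1) (M+1) ⊆ A := by
    intro x hx
    rw [Finset.mem_Icc] at hx
    rcases Nat.lt_or_ge x (M+1) with h | h
    · rw [hmemA]
      right
      refine ⟨by omega, by omega, hA (Finset.mem_Icc.2 ⟨by omega, by omega⟩)⟩
    · have : x = M + 1 := by omega
      rw [this]; exact Finset.mem_insert_self _ _
  have hScard : 1 < S.card := Finset.one_lt_card.2 ⟨m, hmem_m, M-m, hMm_mem, by omega⟩
  have hMm_em : M - m ∈ S.erase m := Finset.mem_erase.2 ⟨by omega, hMm_mem⟩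
  have hM1_not : M + 1 ∉ (S.erase m).erase (M-m) := by
    intro h
    exact hM1 (Finset.mem_of_mem_erase (Finset.mem_of_mem_erase h))
  have hcard : S.card = A.card + 1 := by
    rw [hA_def, Finset.card_insert_of_notMem hM1_not, Finset.card_erase_of_mem hMm_em,
      Finset.card_erase_of_mem hmem_m]
    omega
  have hwt : wt A = wt S := by
    have h1 : wt ((S.erase m).erase (M-m)) + (M-m+1) = wt (S.erase m) :=
      Finset.sum_erase_add _ _ hMm_em
    have h2 : wt (S.erase m) + (m+1) = wt S := Finset.sum_erase_add _ _ hmem_m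
    have h3 : wt A = (M+1+1) + wt ((S.erase m).erase (M-m)) := Finset.sum_insert hM1_not
    omega
  have hcondA : ¬ Finset.Icc (A.max' hAne - A.min' hAne) (A.max' hAne) ⊆ A := by
    intro h
    apply hMm_notA
    apply h
    rw [hmaxA]
    exact Finset.mem_Icc.2 ⟨by omega, by omega⟩
  have htt : tt A hAne = M - m + 1 := by
    apply le_antisymm
    · apply tt_min A hAne (hIccA (Finset.mem_Icc.2 ⟨le_refl _, by omega⟩))
      rw [hmaxA]; exact hIccA
    · have : M - m < tt A hAne := lt_tt A hAne hMm_notA (by rw [hmaxA]; omega)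
      omega
  have hiotaA : iota A = S := by
    rw [iota_eq_opB A hAne hcondA, hmaxA, htt]
    have e1 : M + 1 - (M - m + 1) = m := by omega
    have e2 : M - m + 1 - 1 = M - m := by omega
    rw [e1, e2]
    have e3 : A.erase (M+1) = (S.erase m).erase (M-m) := by
      rw [hA_def, Finset.erase_insert hM1_not]
    rw [e3, Finset.insert_erase hMm_em, Finset.insert_erase hmem_m]
  have hexcA : ¬ exc A := by
    rintro (⟨a, ha⟩|⟨a, ha⟩|ha)
    · have h1 : M + 1 ∈ Finset.Icc a (2*a) := by rw [← ha]; exact Finset.mem_insert_self _ _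
      rw [Finset.mem_Icc] at h1
      have h2 : 2*a ∈ A := by rw [ha]; exact Finset.mem_Icc.2 ⟨by omega, le_refl _⟩
      have h2' := hA_ub _ h2
      have h3 : M-m+1 ∈ Finset.Icc a (2*a) := by
        rw [← ha]; exact hIccA (Finset.mem_Icc.2 ⟨le_refl _, by omega⟩)
      rw [Finset.mem_Icc] at h3
      have h4 : ¬ (a ≤ M - m ∧ M - m ≤ 2*a) := by
        intro hc
        exact hMm_notA (by rw [ha]; exact Finset.mem_Icc.2 hc)
      omega
    · have h1 : M + 1 ∈ Finset.Icc (a+1) (2*a+1) := by rw [← ha]; exact Finset.mem_insert_self _ _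
      rw [Finset.mem_Icc] at h1
      have h2 : 2*a+1 ∈ A := by rw [ha]; exact Finset.mem_Icc.2 ⟨by omega, le_refl _⟩
      have h2' := hA_ub _ h2
      have h3 : M-m+1 ∈ Finset.Icc (a+1) (2*a+1) := by
        rw [← ha]; exact hIccA (Finset.mem_Icc.2 ⟨le_refl _, by omega⟩)
      rw [Finset.mem_Icc] at h3
      have h4 : ¬ (a+1 ≤ M - m ∧ M - m ≤ 2*a+1) := by
        intro hc
        exact hMm_notA (by rw [ha]; exact Finset.mem_Icc.2 hc)
      omega
    · rw [ha] at hAne; exact Finset.not_nonempty_empty hAne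
  rw [hiota]
  exact ⟨hwt, hcard, hexcA, hiotaA⟩

lemma caseB (S : Finset ℕ) (hS : S.Nonempty) (hexc : ¬ exc S)
    (hB : ¬ Finset.Icc (S.max' hS - S.min' hS) (S.max' hS) ⊆ S) :
    wt (iota S) = wt S ∧ (iota S).card = S.card + 1 ∧ ¬ exc (iota S) ∧ iota (iota S) = S := by
  set m := S.min' hS with hm
  set M := S.max' hS with hM
  set t := tt S hS with ht
  have hmem_m : m ∈ S := S.min'_mem hS
  have hmem_M : M ∈ S := S.max'_mem hS
  have hlb : ∀ x ∈ S, m ≤ x := fun x hx => S.min'_le x hx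
  have hub : ∀ x ∈ S, x ≤ M := fun x hx => S.le_max' x hx
  have hmM : m ≤ M := hlb M hmem_M
  have hSsub : S ⊆ Finset.Icc m M := fun x hx => Finset.mem_Icc.2 ⟨hlb x hx, hub x hx⟩
  have htmem : t ∈ S := tt_mem S hS
  have hticc : Finset.Icc t M ⊆ S := tt_icc S hS
  have htm : m ≤ t := hlb t htmem
  have htM : t ≤ M := hub t htmem
  have ht_gt : M - m < t := by
    by_contra hc
    push_neg at hc
    exact hB (le_trans (Finset.Icc_subset_Icc_left hc) hticc)
  have ht1 : 1 ≤ t := by omega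
  have hMtm : M < t + m := by omega
  have ht1_not : t - 1 ∉ S := by
    intro h
    have hsub : Finset.Icc (t-1) M ⊆ S := by
      intro x hx
      rw [Finset.mem_Icc] at hx
      rcases Nat.eq_or_lt_of_le hx.1 with h1 | h1
      · rw [← h1]; exact h
      · exact hticc (Finset.mem_Icc.2 ⟨by omega, hx.2⟩)
    have := tt_min S hS h hsub
    omega
  have hM2t : M + 2 ≤ 2*t := by
    by_contra hc
    push_neg at hc
    have hmt : m = t := by omega
    apply hexc; right; left
    refine ⟨t-1, ?_⟩
    have he : Finset.Icc (t-1+1) (2*(t-1)+1) = Finset.Icc m M := by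
      congr 1 <;> omega
    rw [he]
    have h5 : Finset.Icc m M ⊆ S := by rw [hmt]; exact hticc
    exact le_antisymm hSsub h5
  have hMt_lt : M - t < m := by omega
  have hMt_not : M - t ∉ S := fun h => by have := hlb _ h; omega
  set B := insert (M-t) (insert (t-1) (S.erase M)) with hB_def
  have hiota : iota S = B := iota_eq_opB S hS hB
  have hmemB : ∀ x, x ∈ B ↔ x = M-t ∨ x = t-1 ∨ (x ≠ M ∧ x ∈ S) := by
    intro x
    simp only [hB_def, Finset.mem_insert, Finset.mem_erase]
  have ht1_nem : t - 1 ∉ S.erase M := fun h => ht1_not (Finset.mem_of_mem_erase h)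
  have hMt_nem : M - t ∉ insert (t-1) (S.erase M) := by
    intro h
    rcases Finset.mem_insert.1 h with h1 | h1
    · omega
    · exact hMt_not (Finset.mem_of_mem_erase h1)
  have hcard : B.card = S.card + 1 := by
    rw [hB_def, Finset.card_insert_of_notMem hMt_nem,
      Finset.card_insert_of_notMem ht1_nem, Finset.card_erase_of_mem hmem_M]
    have : 1 ≤ S.card := Finset.card_pos.2 hS
    omega
  have hwt : wt B = wt S := by
    have h1 : wt (S.erase M) + (M+1) = wt S := Finset.sum_erase_add _ _ hmem_M
    have h2 : wt B = (M-t+1) + ((t-1+1) + wt (S.erase M)) := by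
      rw [hB_def, wt, Finset.sum_insert hMt_nem, Finset.sum_insert ht1_nem]; rfl
    omega
  have hB_lb : ∀ x ∈ B, M - t ≤ x := by
    intro x hx
    rcases (hmemB x).1 hx with h | h | ⟨_, h2⟩
    · omega
    · omega
    · have := hlb x h2; omega
  have hB_ub : ∀ x ∈ B, x ≤ M - 1 := by
    intro x hx
    rcases (hmemB x).1 hx with h | h | ⟨h1, h2⟩
    · omega
    · omega
    · have := hub x h2; omega
  have hBne : B.Nonempty := ⟨M-t, Finset.mem_insert_self _ _⟩
  have hM1B : M - 1 ∈ B := by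
    rcases Nat.eq_or_lt_of_le htM with h | h
    · rw [hmemB]; right; left; omega
    · rw [hmemB]; right; right
      exact ⟨by omega, hticc (Finset.mem_Icc.2 ⟨by omega, by omega⟩)⟩
  have hmaxB : B.max' hBne = M - 1 :=
    le_antisymm (Finset.max'_le _ _ _ hB_ub) (Finset.le_max' _ _ hM1B)
  have hminB : B.min' hBne = M - t :=
    le_antisymm (Finset.min'_le _ _ (Finset.mem_insert_self _ _)) (Finset.le_min' _ _ _ hB_lb)
  have hcondB : Finset.Icc (B.max' hBne - B.min' hBne) (B.max' hBne) ⊆ B := by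
    rw [hmaxB, hminB]
    have he : M - 1 - (M - t) = t - 1 := by omega
    rw [he]
    intro x hx
    rw [Finset.mem_Icc] at hx
    rcases Nat.eq_or_lt_of_le hx.1 with h1 | h1
    · rw [hmemB]; right; left; omega
    · rw [hmemB]; right; right
      exact ⟨by omega, hticc (Finset.mem_Icc.2 ⟨by omega, by omega⟩)⟩
  have hiotaB : iota B = S := by
    rw [iota_eq_opA B hBne hcondB, hmaxB, hminB]
    have e1 : M - 1 + 1 = M := by omega
    have e2 : M - 1 - (M - t) = t - 1 := by omega
    rw [e1, e2]
    have e3 : B.erase (M-t) = insert (t-1) (S.erase M) := by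
      rw [hB_def, Finset.erase_insert hMt_nem]
    rw [e3, Finset.erase_insert ht1_nem, Finset.insert_erase hmem_M]
  have hexcB : ¬ exc B := by
    rintro (⟨a, ha⟩|⟨a, ha⟩|ha)
    · have h1 : M - 1 ∈ Finset.Icc a (2*a) := by rw [← ha]; exact hM1B
      rw [Finset.mem_Icc] at h1
      have h2 : 2*a ∈ B := by rw [ha]; exact Finset.mem_Icc.2 ⟨by omega, le_refl _⟩
      have h2' := hB_ub _ h2
      have h3 : M - t ∈ Finset.Icc a (2*a) := by rw [← ha]; exact Finset.mem_insert_self _ _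
      rw [Finset.mem_Icc] at h3
      have h4 : a ∈ B := by rw [ha]; exact Finset.mem_Icc.2 ⟨le_refl _, by omega⟩
      have h4' := hB_lb _ h4
      omega
    · have h1 : M - 1 ∈ Finset.Icc (a+1) (2*a+1) := by rw [← ha]; exact hM1B
      rw [Finset.mem_Icc] at h1
      have h2 : 2*a+1 ∈ B := by rw [ha]; exact Finset.mem_Icc.2 ⟨by omega, le_refl _⟩
      have h2' := hB_ub _ h2
      have h3 : M - t ∈ Finset.Icc (a+1) (2*a+1) := by rw [← ha]; exact Finset.mem_insert_self _ _
      rw [Finset.mem_Icc] at h3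
      have h4 : a+1 ∈ B := by rw [ha]; exact Finset.mem_Icc.2 ⟨le_refl _, by omega⟩
      have h4' := hB_lb _ h4
      omega
    · rw [ha] at hBne; exact Finset.not_nonempty_empty hBne
  rw [hiota]
  exact ⟨hwt, hcard, hexcB, hiotaB⟩
lemma not_exc_nonempty {S : Finset ℕ} (h : ¬ exc S) : S.Nonempty := by
  rcases S.eq_empty_or_nonempty with h'|h'
  · exact absurd (Or.inr (Or.inr h')) h
  · exact h'

lemma iota_spec (S : Finset ℕ) (hexc : ¬ exc S) :
    wt (iota S) = wt S ∧ ¬ exc (iota S) ∧ iota (iota S) = S ∧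
      (-1 : ℂ)^(iota S).card = -(-1 : ℂ)^S.card := by
  have hS := not_exc_nonempty hexc
  by_cases h : Finset.Icc (S.max' hS - S.min' hS) (S.max' hS) ⊆ S
  · obtain ⟨h1, h2, h3, h4⟩ := caseA S hS hexc h
    refine ⟨h1, h3, h4, ?_⟩
    rw [h2, pow_succ]; ring
  · obtain ⟨h1, h2, h3, h4⟩ := caseB S hS hexc h
    refine ⟨h1, h3, h4, ?_⟩
    rw [h2, pow_succ]; ring

lemma F_iota (q : ℂ) (S : Finset ℕ) (hexc : ¬ exc S) : F q (iota S) = - F q S := by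
  obtain ⟨h1, _, _, h4⟩ := iota_spec S hexc
  rw [F_eq, F_eq, h1, h4]
  ring

def invol : {S : Finset ℕ // ¬ exc S} ≃ {S : Finset ℕ // ¬ exc S} where
  toFun x := ⟨iota x.1, (iota_spec x.1 x.2).2.1⟩
  invFun x := ⟨iota x.1, (iota_spec x.1 x.2).2.1⟩
  left_inv x := Subtype.ext (iota_spec x.1 x.2).2.2.1
  right_inv x := Subtype.ext (iota_spec x.1 x.2).2.2.1

lemma tsum_nonexc_zero (q : ℂ) :
    ∑' (x : {S : Finset ℕ // ¬ exc S}), F q x.1 = 0 := by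
  set T := ∑' (x : {S : Finset ℕ // ¬ exc S}), F q x.1 with hT
  have h1 : ∑' (x : {S : Finset ℕ // ¬ exc S}), F q ((invol x).1) = T :=
    invol.tsum_eq (fun x => F q x.1)
  have h2 : ∀ x : {S : Finset ℕ // ¬ exc S}, F q ((invol x).1) = - F q x.1 :=
    fun x => F_iota q x.1 x.2
  rw [tsum_congr h2, tsum_neg] at h1
  linear_combination (-1/2 : ℂ) * h1

def pent (k : ℤ) : Finset ℕ :=
  if 0 < k then Finset.Icc (k.toNat - 1) (2*(k.toNat - 1))
  else if k < 0 then Finset.Icc ((-k).toNat - 1 + 1) (2*((-k).toNat - 1) + 1)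
  else ∅

lemma pent_pos {k : ℤ} (h : 0 < k) :
    pent k = Finset.Icc (k.toNat - 1) (2*(k.toNat - 1)) := by rw [pent, if_pos h]

lemma pent_neg {k : ℤ} (h : k < 0) :
    pent k = Finset.Icc ((-k).toNat - 1 + 1) (2*((-k).toNat - 1) + 1) := by
  rw [pent, if_neg (by omega), if_pos h]

lemma pent_zero : pent 0 = ∅ := by rw [pent]; norm_num

lemma pent_exc (k : ℤ) : exc (pent k) := by
  rcases lt_trichotomy 0 k with hk | hk | hk
  · rw [pent_pos hk]; exact Or.inl ⟨_, rfl⟩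
  · rw [← hk, pent_zero]; exact Or.inr (Or.inr rfl)
  · rw [pent_neg hk]; exact Or.inr (Or.inl ⟨_, rfl⟩)

lemma Icc_inj {a b c d : ℕ} (hab : a ≤ b) (h : Finset.Icc a b = Finset.Icc c d) :
    a = c ∧ b = d := by
  have h1 : a ∈ Finset.Icc c d := h ▸ Finset.mem_Icc.2 ⟨le_refl _, hab⟩
  have h2 : b ∈ Finset.Icc c d := h ▸ Finset.mem_Icc.2 ⟨hab, le_refl _⟩
  rw [Finset.mem_Icc] at h1 h2
  have hcd : c ≤ d := le_trans h1.1 h1.2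
  have h3 : c ∈ Finset.Icc a b := h.symm ▸ Finset.mem_Icc.2 ⟨le_refl _, hcd⟩
  have h4 : d ∈ Finset.Icc a b := h.symm ▸ Finset.mem_Icc.2 ⟨hcd, le_refl _⟩
  rw [Finset.mem_Icc] at h3 h4
  omega

lemma pent_nonempty_of_ne {k : ℤ} (h : k ≠ 0) : (pent k).Nonempty := by
  rcases lt_trichotomy 0 k with hk | hk | hk
  · rw [pent_pos hk]; exact Finset.nonempty_Icc.2 (by omega)
  · omega
  · rw [pent_neg hk]; exact Finset.nonempty_Icc.2 (by omega)

lemma pent_inj : Function.Injective pent := by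
  intro k k' h
  rcases eq_or_ne k 0 with hk | hk
  · rcases eq_or_ne k' 0 with hk' | hk'
    · rw [hk, hk']
    · exfalso
      have := pent_nonempty_of_ne hk'
      rw [← h, hk, pent_zero] at this
      exact Finset.not_nonempty_empty this
  · rcases eq_or_ne k' 0 with hk' | hk'
    · exfalso
      have := pent_nonempty_of_ne hk
      rw [h, hk', pent_zero] at this
      exact Finset.not_nonempty_empty this
    · rcases lt_trichotomy 0 k with hkp | hkp | hkp <;>
        rcases lt_trichotomy 0 k' with hkp' | hkp' | hkp'
      · rw [pent_pos hkp, pent_pos hkp'] at h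
        have := Icc_inj (by omega) h
        omega
      · omega
      · rw [pent_pos hkp, pent_neg hkp'] at h
        have := Icc_inj (by omega) h
        omega
      all_goals try omega
      · rw [pent_neg hkp, pent_pos hkp'] at h
        have := Icc_inj (by omega) h
        omega
      · rw [pent_neg hkp, pent_neg hkp'] at h
        have := Icc_inj (by omega) h
        omega

lemma pent_surj : ∀ S : Finset ℕ, exc S → ∃ k, pent k = S := by
  rintro S (⟨a, ha⟩|⟨a, ha⟩|ha)
  · refine ⟨(a : ℤ) + 1, ?_⟩
    rw [pent_pos (by omega), ha]
    congr 1 <;> omega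
  · refine ⟨-((a : ℤ) + 1), ?_⟩
    rw [pent_neg (by omega), ha]
    congr 1 <;> omega
  · exact ⟨0, by rw [pent_zero, ha]⟩

lemma wt_Icc_z (a d : ℕ) : (wt (Finset.Icc a (a+d)) : ℤ) * 2 = (d+1) * (2*a+d+2) := by
  induction d with
  | zero =>
      have : wt (Finset.Icc a (a+0)) = a + 1 := by
        simp [wt, Finset.Icc_self]
      rw [this]; push_cast; try ring
  | succ d ih =>
      have hins : Finset.Icc a (a+(d+1)) = insert (a+d+1) (Finset.Icc a (a+d)) := by
        rw [show a+(d+1) = (a+d)+1 by ring, ← Finset.insert_Icc_right_eq_Icc_add_one (by omega)]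
      have hnot : a+d+1 ∉ Finset.Icc a (a+d) := by
        rw [Finset.mem_Icc]; omega
      have e : wt (Finset.Icc a (a+(d+1))) = (a+d+2) + wt (Finset.Icc a (a+d)) := by
        rw [hins]
        rw [show wt (insert (a+d+1) (Finset.Icc a (a+d)))
            = (a+d+1+1) + wt (Finset.Icc a (a+d)) from Finset.sum_insert hnot]
      rw [e]; push_cast; linear_combination ih

lemma F_pent (q : ℂ) (k : ℤ) : F q (pent k) = (-1:ℂ)^k * q ^ (k * (3 * k - 1) / 2) := by
  rcases lt_trichotomy 0 k with hk | hk | hk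
  · set n := k.toNat with hn
    have hn1 : 1 ≤ n := by omega
    have hk' : k = (n : ℤ) := by omega
    have hp : pent k = Finset.Icc (n-1) ((n-1)+(n-1)) := by
      rw [pent_pos hk]
      congr 1
      omega
    have hcard : (pent k).card = n := by rw [hp, Nat.card_Icc]; omega
    have hwt := wt_Icc_z (n-1) (n-1)
    rw [← hp] at hwt
    set w := wt (pent k) with hw
    push_cast [Nat.cast_sub hn1] at hwt
    have h2 : k * (3 * k - 1) = (w : ℤ) * 2 := by
      rw [hk']; linear_combination -hwt
    have h3 : k * (3 * k - 1) / 2 = (w : ℤ) := by omega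
    rw [F_eq, hcard, ← hw, h3, hk', zpow_natCast, zpow_natCast]
  · rw [← hk, pent_zero]
    have : F q ∅ = 1 := by rw [F_eq]; simp [wt]
    rw [this]
    norm_num
  · set n := (-k).toNat with hn
    have hn1 : 1 ≤ n := by omega
    have hk' : k = -(n : ℤ) := by omega
    have hp : pent k = Finset.Icc n (n+(n-1)) := by
      rw [pent_neg hk]
      congr 1 <;> omega
    have hcard : (pent k).card = n := by rw [hp, Nat.card_Icc]; omega
    have hwt := wt_Icc_z n (n-1)
    rw [← hp] at hwt
    set w := wt (pent k) with hw
    push_cast [Nat.cast_sub hn1] at hwt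
    have h2 : k * (3 * k - 1) = (w : ℤ) * 2 := by
      rw [hk']; linear_combination -hwt
    have h3 : k * (3 * k - 1) / 2 = (w : ℤ) := by omega
    have hinv : ((-1:ℂ)^n)⁻¹ = (-1:ℂ)^n := by
      have : ((-1:ℂ)^n) * ((-1:ℂ)^n) = 1 := by rw [← mul_pow]; norm_num
      exact inv_eq_of_mul_eq_one_right this
    rw [F_eq, hcard, ← hw, h3, hk', zpow_neg, zpow_natCast, zpow_natCast, hinv]

noncomputable def pentEquiv : ℤ ≃ {S : Finset ℕ // exc S} :=
  Equiv.ofBijective (fun k => ⟨pent k, pent_exc k⟩)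
    ⟨fun k k' h => pent_inj (congrArg Subtype.val h),
     fun S => (pent_surj S.1 S.2).imp fun k hk => Subtype.ext hk⟩

lemma main (q : ℂ) (hq : ‖q‖ < 1) :
    ∑' S, F q S = ∑' m : ℤ, (-1:ℂ)^m * q ^ (m * (3 * m - 1) / 2) := by
  have hsumm := summable_F q hq
  have hsplit := Summable.tsum_add_tsum_compl (f := F q) (s := {S | exc S})
      (hsumm.subtype _) (hsumm.subtype _)
  have hzero : ∑' (x : ↑({S : Finset ℕ | exc S}ᶜ)), F q x.1 = 0 := tsum_nonexc_zero q
  rw [hzero, add_zero] at hsplit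
  rw [← hsplit]
  refine Eq.trans ?_ (tsum_congr fun k => F_pent q k)
  exact (pentEquiv.tsum_eq (fun x : {S : Finset ℕ // exc S} => F q x.1)).symm

end EulerPentagon

/-- Euler's pentagonal number theorem: for `|q| < 1`,
`∏_{n=1}^∞ (1 - q^n) = ∑_{m ∈ ℤ} (-1)^m q^{m(3m-1)/2}`. -/
theorem euler_pentagonal (q : ℂ) (hq : ‖q‖ < 1) :
    ∏' n : ℕ, (1 - q ^ (n + 1)) = ∑' m : ℤ, (-1 : ℂ) ^ m * q ^ (m * (3 * m - 1) / 2) := by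
  rw [EulerPentagon.tprod_eq_tsum_F q hq, EulerPentagon.main q hq]
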